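/- Fix an integer n ≥ 2, a real number M > 0 and a real number r > 0. Then, as ℓ → ∞ through the integers, the Zerilli-type potentials converge: V_{1,nℓ}(r) + V_{2,nℓ}(r) + V_{3,nℓ}(r) → (1/(2r²)) [ (n² − 2n + 8) − (5n² − 10n + 8)(2M/r^{n−1}) ]. -/

import Mathlib

open Filter

/-- `D_{nℓ}(r) = n(n+1)M r^{1-n} + (ℓ-1)(n+ℓ)`. -/
noncomputable def Dnl (n ℓ : ℕ) (M r : ℝ) : ℝ :=
  (n:ℝ)*((n:ℝ)+1)*M / r^(n-1) + ((ℓ:ℝ)-1)*((n:ℝ)+(ℓ:ℝ))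

/-- `V_{1,nℓ}(r) = -r^{-2}(ℓ(ℓ+n-1) - 2n)`. -/
noncomputable def V1nl (n ℓ : ℕ) (r : ℝ) : ℝ :=
  -((ℓ:ℝ)*((ℓ:ℝ)+(n:ℝ)-1) - 2*(n:ℝ)) / r^2

/-- `V_{2,nℓ}(r) = r^{-2}[ (n²-10n+16)/4 - ((3n²-12n+16)/4)(2M/r^{n-1}) ]`. -/
noncomputable def V2nl (n : ℕ) (M r : ℝ) : ℝ :=
  (((n:ℝ)^2 - 10*(n:ℝ) + 16)/4
    - ((3*(n:ℝ)^2 - 12*(n:ℝ) + 16)/4) * (2*M/r^(n-1))) / r^2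

/-- The component `V_{3,nℓ}` of the Zerilli-type potential. -/
noncomputable def V3nl (n ℓ : ℕ) (M r : ℝ) : ℝ :=
  (((ℓ:ℝ)-1)^2*((n:ℝ)+(ℓ:ℝ))^2*(n:ℝ)*((n:ℝ)+2)
    + 4*((ℓ:ℝ)-1)^3*((n:ℝ)+(ℓ:ℝ))^3
    - (6*((ℓ:ℝ)-1)*((n:ℝ)+(ℓ:ℝ))*((n:ℝ)-2)*(n:ℝ)^2*((n:ℝ)+1)*M
        + 6*((ℓ:ℝ)-1)^2*((n:ℝ)+(ℓ:ℝ))^2*((n:ℝ)-4)*(n:ℝ)*M) / r^(n-1)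
    + (4*((ℓ:ℝ)-1)*((n:ℝ)+(ℓ:ℝ))*(n:ℝ)*((n:ℝ)+1)*(2*(n:ℝ)^2-3*(n:ℝ)+4)*M^2
        + ((n:ℝ)-4)*((n:ℝ)-2)*(n:ℝ)^2*((n:ℝ)+1)^2*M^2) / r^(2*n-2)
    + 2*(n:ℝ)^4*((n:ℝ)+1)^2*M^3 / r^(3*n-3))
  / (4*r^2*(Dnl n ℓ M r)^2)

/-- First-order coefficient in the exact decomposition of the potential. -/
noncomputable def Bcoef (n : ℕ) (M r : ℝ) : ℝ :=
  (2*(n:ℝ)^2*(M/r^(n-1)) - 2*(n:ℝ)^4*(M/r^(n-1))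
    + 4*(n:ℝ)*(M/r^(n-1))^2 - 8*(n:ℝ)^2*(M/r^(n-1))^2
    - 4*(n:ℝ)^3*(M/r^(n-1))^2 + 8*(n:ℝ)^4*(M/r^(n-1))^2) / r^2

/-- Second-order coefficient in the exact decomposition of the potential. -/
noncomputable def Ccoef (n : ℕ) (M r : ℝ) : ℝ :=
  (2*(n:ℝ)^2*(M/r^(n-1))^2 - 4*(n:ℝ)^4*(M/r^(n-1))^2 + 2*(n:ℝ)^6*(M/r^(n-1))^2
    - 4*(n:ℝ)^2*(M/r^(n-1))^3 + 8*(n:ℝ)^4*(M/r^(n-1))^3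
    - 4*(n:ℝ)^6*(M/r^(n-1))^3) / r^2

set_option maxHeartbeats 2000000 in
/-- General algebraic identity underlying the decomposition. -/
lemma zerilli_aux (x nn u r : ℝ) (hr : r ≠ 0)
    (hd : nn*(nn+1)*u + (x-1)*(nn+x) ≠ 0) :
    -(x*(x+nn-1) - 2*nn) / r^2
    + ((nn^2 - 10*nn + 16)/4 - ((3*nn^2 - 12*nn + 16)/4) * (2*u)) / r^2
    + ((x-1)^2*(nn+x)^2*nn*(nn+2) + 4*(x-1)^3*(nn+x)^3
       - (6*(x-1)*(nn+x)*(nn-2)*nn^2*(nn+1) + 6*(x-1)^2*(nn+x)^2*(nn-4)*nn) * u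
       + (4*(x-1)*(nn+x)*nn*(nn+1)*(2*nn^2-3*nn+4) + (nn-4)*(nn-2)*nn^2*(nn+1)^2) * u^2
       + 2*nn^4*(nn+1)^2*u^3)
      / (4*r^2*(nn*(nn+1)*u + (x-1)*(nn+x))^2)
    = (1/(2*r^2)) * ((nn^2 - 2*nn + 8) - (5*nn^2 - 10*nn + 8) * (2*u))
      + ((2*nn^2*u - 2*nn^4*u + 4*nn*u^2 - 8*nn^2*u^2 - 4*nn^3*u^2 + 8*nn^4*u^2)/r^2)
          * (nn*(nn+1)*u + (x-1)*(nn+x))⁻¹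
      + ((2*nn^2*u^2 - 4*nn^4*u^2 + 2*nn^6*u^2 - 4*nn^2*u^3 + 8*nn^4*u^3 - 4*nn^6*u^3)/r^2)
          * ((nn*(nn+1)*u + (x-1)*(nn+x))⁻¹)^2 := by
  generalize hD : nn*(nn+1)*u + (x-1)*(nn+x) = D at hd ⊢
  field_simp
  rw [← hD]
  ring

set_option maxHeartbeats 2000000 in
/-- Exact algebraic decomposition of the Zerilli-type potential. -/
lemma zerilli_decomp (n : ℕ) (M r : ℝ) (hr : r ≠ 0) (ℓ : ℕ)
    (hD : Dnl n ℓ M r ≠ 0) :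
    V1nl n ℓ r + V2nl n M r + V3nl n ℓ M r =
      (1/(2*r^2)) * (((n:ℝ)^2 - 2*(n:ℝ) + 8)
        - (5*(n:ℝ)^2 - 10*(n:ℝ) + 8) * (2*M/r^(n-1)))
      + Bcoef n M r * (Dnl n ℓ M r)⁻¹
      + Ccoef n M r * ((Dnl n ℓ M r)⁻¹)^2 := by
  have h2 : r^(2*n-2) = (r^(n-1))^2 := by rw [← pow_mul]; congr 1; omega
  have h3 : r^(3*n-3) = (r^(n-1))^3 := by rw [← pow_mul]; congr 1; omega
  have ha : r^(n-1) ≠ 0 := pow_ne_zero _ hr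
  have hd' : (n:ℝ)*((n:ℝ)+1)*(M/r^(n-1)) + ((ℓ:ℝ)-1)*((n:ℝ)+(ℓ:ℝ)) ≠ 0 := by
    intro h; apply hD; unfold Dnl; rw [← h]; ring
  have key := zerilli_aux (ℓ:ℝ) (n:ℝ) (M / r^(n-1)) r hr hd'
  calc V1nl n ℓ r + V2nl n M r + V3nl n ℓ M r
      = -((ℓ:ℝ)*((ℓ:ℝ)+(n:ℝ)-1) - 2*(n:ℝ)) / r^2
        + (((n:ℝ)^2 - 10*(n:ℝ) + 16)/4 - ((3*(n:ℝ)^2 - 12*(n:ℝ) + 16)/4) * (2*(M/r^(n-1)))) / r^2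
        + (((ℓ:ℝ)-1)^2*((n:ℝ)+(ℓ:ℝ))^2*(n:ℝ)*((n:ℝ)+2) + 4*((ℓ:ℝ)-1)^3*((n:ℝ)+(ℓ:ℝ))^3
           - (6*((ℓ:ℝ)-1)*((n:ℝ)+(ℓ:ℝ))*((n:ℝ)-2)*(n:ℝ)^2*((n:ℝ)+1)
              + 6*((ℓ:ℝ)-1)^2*((n:ℝ)+(ℓ:ℝ))^2*((n:ℝ)-4)*(n:ℝ)) * (M/r^(n-1))
           + (4*((ℓ:ℝ)-1)*((n:ℝ)+(ℓ:ℝ))*(n:ℝ)*((n:ℝ)+1)*(2*(n:ℝ)^2-3*(n:ℝ)+4)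
              + ((n:ℝ)-4)*((n:ℝ)-2)*(n:ℝ)^2*((n:ℝ)+1)^2) * (M/r^(n-1))^2
           + 2*(n:ℝ)^4*((n:ℝ)+1)^2*(M/r^(n-1))^3)
          / (4*r^2*((n:ℝ)*((n:ℝ)+1)*(M/r^(n-1)) + ((ℓ:ℝ)-1)*((n:ℝ)+(ℓ:ℝ)))^2) := by
        unfold V1nl V2nl V3nl Dnl
        rw [h2, h3]
        ring
    _ = (1/(2*r^2)) * (((n:ℝ)^2 - 2*(n:ℝ) + 8) - (5*(n:ℝ)^2 - 10*(n:ℝ) + 8) * (2*(M/r^(n-1))))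
        + ((2*(n:ℝ)^2*(M/r^(n-1)) - 2*(n:ℝ)^4*(M/r^(n-1)) + 4*(n:ℝ)*(M/r^(n-1))^2
            - 8*(n:ℝ)^2*(M/r^(n-1))^2 - 4*(n:ℝ)^3*(M/r^(n-1))^2 + 8*(n:ℝ)^4*(M/r^(n-1))^2)/r^2)
            * ((n:ℝ)*((n:ℝ)+1)*(M/r^(n-1)) + ((ℓ:ℝ)-1)*((n:ℝ)+(ℓ:ℝ)))⁻¹
        + ((2*(n:ℝ)^2*(M/r^(n-1))^2 - 4*(n:ℝ)^4*(M/r^(n-1))^2 + 2*(n:ℝ)^6*(M/r^(n-1))^2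
            - 4*(n:ℝ)^2*(M/r^(n-1))^3 + 8*(n:ℝ)^4*(M/r^(n-1))^3 - 4*(n:ℝ)^6*(M/r^(n-1))^3)/r^2)
            * (((n:ℝ)*((n:ℝ)+1)*(M/r^(n-1)) + ((ℓ:ℝ)-1)*((n:ℝ)+(ℓ:ℝ)))⁻¹)^2 := key
    _ = (1/(2*r^2)) * (((n:ℝ)^2 - 2*(n:ℝ) + 8)
          - (5*(n:ℝ)^2 - 10*(n:ℝ) + 8) * (2*M/r^(n-1)))
        + Bcoef n M r * (Dnl n ℓ M r)⁻¹
        + Ccoef n M r * ((Dnl n ℓ M r)⁻¹)^2 := by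
        unfold Bcoef Ccoef Dnl
        ring

/-- **Convergence of the Zerilli-type potentials.**
For fixed `n ≥ 2`, `M > 0` and `r > 0`, as `ℓ → ∞`,
`V_{1,nℓ}(r) + V_{2,nℓ}(r) + V_{3,nℓ}(r) →
  (1/(2r²))[(n² - 2n + 8) - (5n² - 10n + 8)(2M/r^{n-1})]`. -/
theorem zerilli_potential_limit
    (n : ℕ) (hn : 2 ≤ n) (M r : ℝ) (hM : 0 < M) (hr : 0 < r) :
    Tendsto (fun ℓ : ℕ => V1nl n ℓ r + V2nl n M r + V3nl n ℓ M r) atTop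
      (nhds ((1/(2*r^2)) * (((n:ℝ)^2 - 2*(n:ℝ) + 8)
        - (5*(n:ℝ)^2 - 10*(n:ℝ) + 8) * (2*M/r^(n-1))))) := by
  have hDtop : Tendsto (fun ℓ : ℕ => Dnl n ℓ M r) atTop atTop := by
    unfold Dnl
    apply tendsto_atTop_add_const_left
    exact Tendsto.atTop_mul_atTop₀
      (tendsto_atTop_add_const_right _ (-1 : ℝ) tendsto_natCast_atTop_atTop)
      (tendsto_atTop_add_const_left _ ((n:ℝ)) tendsto_natCast_atTop_atTop)
  have hinv : Tendsto (fun ℓ : ℕ => (Dnl n ℓ M r)⁻¹) atTop (nhds 0) :=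
    hDtop.inv_tendsto_atTop
  have hmain : Tendsto (fun ℓ : ℕ =>
      (1/(2*r^2)) * (((n:ℝ)^2 - 2*(n:ℝ) + 8)
        - (5*(n:ℝ)^2 - 10*(n:ℝ) + 8) * (2*M/r^(n-1)))
      + Bcoef n M r * (Dnl n ℓ M r)⁻¹
      + Ccoef n M r * ((Dnl n ℓ M r)⁻¹)^2) atTop
      (nhds ((1/(2*r^2)) * (((n:ℝ)^2 - 2*(n:ℝ) + 8)
        - (5*(n:ℝ)^2 - 10*(n:ℝ) + 8) * (2*M/r^(n-1))))) := by
    have h1 : Tendsto (fun ℓ : ℕ => Bcoef n M r * (Dnl n ℓ M r)⁻¹) atTop (nhds 0) := by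
      simpa using hinv.const_mul (Bcoef n M r)
    have h2 : Tendsto (fun ℓ : ℕ => Ccoef n M r * ((Dnl n ℓ M r)⁻¹)^2) atTop (nhds 0) := by
      simpa using (hinv.pow 2).const_mul (Ccoef n M r)
    simpa using (tendsto_const_nhds.add h1).add h2
  refine hmain.congr' ?_
  filter_upwards [hDtop.eventually_gt_atTop 0] with ℓ hD
  exact (zerilli_decomp n M r (ne_of_gt hr) ℓ (ne_of_gt hD)).symm
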